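/- Let Σ₁ = (A₁,B₁,C₁,D₁; X₁,U,Y) and Σ₂ = (A₂,B₂,C₂,D₂; X₂,U,Y) be controllable systems on complex Hilbert spaces with D₁ = D₂ and C₁∘A₁ⁿ∘B₁ = C₂∘A₂ⁿ∘B₂ for all n ≥ 0, and suppose that for every n ≥ 0 and all u₀,…,uₙ ∈ U: ‖∑_{k=0}^{n} A₁ᵏ(B₁ uₖ)‖ = ‖∑_{k=0}^{n} A₂ᵏ(B₂ uₖ)‖. Then Σ₁ and Σ₂ are unitarily similar: there exists a unitary operator V : X₁ → X₂ with V∘A₁ = A₂∘V, V∘B₁ = B₂ and C₁ = C₂∘V. -/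

import Mathlib

/-!
STATEMENT 12: Two controllable realizations of the same transfer function whose
state energies coincide are unitarily similar.
-/

noncomputable section

open ContinuousLinearMap

variable {X₁ X₂ U Y : Type*}
  [NormedAddCommGroup X₁] [InnerProductSpace ℂ X₁] [CompleteSpace X₁]
  [NormedAddCommGroup X₂] [InnerProductSpace ℂ X₂] [CompleteSpace X₂]
  [NormedAddCommGroup U] [InnerProductSpace ℂ U] [CompleteSpace U]
  [NormedAddCommGroup Y] [InnerProductSpace ℂ Y] [CompleteSpace Y]

/-- The controllable subspace `X^c` of the system. -/
def contSub {W : Type*} [NormedAddCommGroup W] [InnerProductSpace ℂ W] [CompleteSpace W]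
    (A : W →L[ℂ] W) (B : U →L[ℂ] W) : Submodule ℂ W :=
  (Submodule.span ℂ (⋃ n : ℕ, Set.range fun u : U => (A ^ n) (B u))).topologicalClosure

namespace St12

variable {W V U : Type*} [NormedAddCommGroup W] [InnerProductSpace ℂ W]
  [NormedAddCommGroup V] [InnerProductSpace ℂ V]
  [NormedAddCommGroup U] [InnerProductSpace ℂ U]

/-- `Psi A B u n = ∑_{k=0}^{n} A^k (B (u k))`. -/
def Psi (A : W →L[ℂ] W) (B : U →L[ℂ] W) (u : ℕ → U) (n : ℕ) : W :=
  ∑ k ∈ Finset.range (n + 1), (A ^ k) (B (u k))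

/-- Truncation of a sequence after index `n`. -/
def tr (u : ℕ → U) (n : ℕ) : ℕ → U := fun k => if k ≤ n then u k else 0

variable (A : W →L[ℂ] W) (B : U →L[ℂ] W)

lemma Psi_tr {n N : ℕ} (h : n ≤ N) (u : ℕ → U) : Psi A B (tr u n) N = Psi A B u n := by
  unfold Psi
  rw [← Finset.sum_subset (Finset.range_subset_range.2 (by omega) :
      Finset.range (n + 1) ⊆ Finset.range (N + 1))]
  · exact Finset.sum_congr rfl fun k hk => by
      simp only [Finset.mem_range] at hk
      simp [tr, Nat.lt_succ_iff.mp hk]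
  · intro k _ hk
    simp only [Finset.mem_range] at hk
    have : ¬ k ≤ n := by omega
    simp [tr, this]

lemma Psi_add (u v : ℕ → U) (n : ℕ) : Psi A B (u + v) n = Psi A B u n + Psi A B v n := by
  simp [Psi, Finset.sum_add_distrib]

lemma Psi_sub (u v : ℕ → U) (n : ℕ) : Psi A B (u - v) n = Psi A B u n - Psi A B v n := by
  simp [Psi, Finset.sum_sub_distrib]

lemma Psi_smul (c : ℂ) (u : ℕ → U) (n : ℕ) : Psi A B (c • u) n = c • Psi A B u n := by
  simp [Psi, Finset.smul_sum]

lemma Psi_zero : Psi A B (fun _ => 0) 0 = 0 := by simp [Psi]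

lemma Psi_single (m : ℕ) (u : U) :
    Psi A B (fun k => if k = m then u else 0) m = (A ^ m) (B u) := by
  unfold Psi
  rw [Finset.sum_congr rfl (g := fun k => if k = m then (A ^ m) (B u) else 0)
    (fun k _ => by by_cases h : k = m <;> simp [h])]
  simp

lemma Psi_shift (u : ℕ → U) (n : ℕ) :
    A (Psi A B u n) = Psi A B (fun k => if k = 0 then 0 else u (k - 1)) (n + 1) := by
  unfold Psi
  rw [map_sum,
    Finset.sum_range_succ' (fun k => (A ^ k) (B (if k = 0 then 0 else u (k - 1)))) (n + 1)]
  norm_num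
  exact Finset.sum_congr rfl fun k _ => ((Function.Commute.iterate_self _ _) _).symm

/-- Characterization of the (non-closed) span of the reachable vectors. -/
lemma mem_span_iff (x : W) :
    x ∈ Submodule.span ℂ (⋃ n : ℕ, Set.range fun u : U => (A ^ n) (B u)) ↔
      ∃ p : (ℕ → U) × ℕ, Psi A B p.1 p.2 = x := by
  constructor
  · intro hx
    induction hx using Submodule.span_induction with
    | mem x hx =>
      obtain ⟨s, ⟨m, rfl⟩, u, rfl⟩ := hx
      exact ⟨(fun k => if k = m then u else 0, m), Psi_single A B m u⟩
    | zero => exact ⟨(fun _ => 0, 0), Psi_zero A B⟩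
    | add x y hx hy ihx ihy =>
      obtain ⟨⟨u, n⟩, rfl⟩ := ihx
      obtain ⟨⟨v, m⟩, rfl⟩ := ihy
      refine ⟨(tr u n + tr v m, max n m), ?_⟩
      rw [Psi_add, Psi_tr A B (le_max_left n m), Psi_tr A B (le_max_right n m)]
    | smul c x hx ihx =>
      obtain ⟨⟨u, n⟩, rfl⟩ := ihx
      exact ⟨(c • u, n), Psi_smul A B c u n⟩
  · rintro ⟨⟨u, n⟩, rfl⟩
    exact Submodule.sum_mem _ fun k _ => Submodule.subset_span
      (Set.mem_iUnion.2 ⟨k, ⟨u k, rfl⟩⟩)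

end St12

open St12 in
theorem statement12
    (A₁ : X₁ →L[ℂ] X₁) (B₁ : U →L[ℂ] X₁) (C₁ : X₁ →L[ℂ] Y) (D₁ : U →L[ℂ] Y)
    (A₂ : X₂ →L[ℂ] X₂) (B₂ : U →L[ℂ] X₂) (C₂ : X₂ →L[ℂ] Y) (D₂ : U →L[ℂ] Y)
    (hc₁ : contSub A₁ B₁ = ⊤) (hc₂ : contSub A₂ B₂ = ⊤)
    (hD : D₁ = D₂)
    (hmom : ∀ n : ℕ, C₁.comp ((A₁ ^ n).comp B₁) = C₂.comp ((A₂ ^ n).comp B₂))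
    (hE : ∀ (n : ℕ) (u : Fin (n + 1) → U),
      ‖∑ k : Fin (n + 1), (A₁ ^ (k : ℕ)) (B₁ (u k))‖
        = ‖∑ k : Fin (n + 1), (A₂ ^ (k : ℕ)) (B₂ (u k))‖) :
    ∃ V : X₁ ≃ₗᵢ[ℂ] X₂,
      (∀ x : X₁, V (A₁ x) = A₂ (V x)) ∧ (∀ u : U, V (B₁ u) = B₂ u)
        ∧ (∀ x : X₁, C₁ x = C₂ (V x)) := by
  classical
  -- norms of corresponding reachable vectors agree
  have hnorm : ∀ (u : ℕ → U) (n : ℕ), ‖Psi A₁ B₁ u n‖ = ‖Psi A₂ B₂ u n‖ := by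
    intro u n
    simp only [Psi]
    rw [← Fin.sum_univ_eq_sum_range (fun k => (A₁ ^ k) (B₁ (u k))) (n + 1),
      ← Fin.sum_univ_eq_sum_range (fun k => (A₂ ^ k) (B₂ (u k))) (n + 1)]
    exact hE n fun k => u k
  -- the correspondence Ψ₁(u,n) ↦ Ψ₂(u,n) is well defined
  have key : ∀ (u : ℕ → U) (n : ℕ) (v : ℕ → U) (m : ℕ),
      Psi A₁ B₁ u n = Psi A₁ B₁ v m → Psi A₂ B₂ u n = Psi A₂ B₂ v m := by
    intro u n v m h
    set N := max n m with hN
    have h1 : Psi A₁ B₁ (tr u n - tr v m) N = 0 := by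
      rw [Psi_sub, Psi_tr A₁ B₁ (le_max_left n m), Psi_tr A₁ B₁ (le_max_right n m), h,
        sub_self]
    have h2 : Psi A₂ B₂ (tr u n - tr v m) N = 0 := by
      have := hnorm (tr u n - tr v m) N
      rw [h1, norm_zero] at this
      exact norm_eq_zero.mp this.symm
    rw [Psi_sub, Psi_tr A₂ B₂ (le_max_left n m), Psi_tr A₂ B₂ (le_max_right n m),
      sub_eq_zero] at h2
    exact h2
  -- a function realizing the correspondence
  obtain ⟨f, hf⟩ : ∃ f : X₁ → X₂, ∀ (u : ℕ → U) (n : ℕ),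
      f (Psi A₁ B₁ u n) = Psi A₂ B₂ u n := by
    refine ⟨fun x => if h : ∃ p : (ℕ → U) × ℕ, Psi A₁ B₁ p.1 p.2 = x then
      Psi A₂ B₂ h.choose.1 h.choose.2 else 0, ?_⟩
    intro u n
    have hex : ∃ p : (ℕ → U) × ℕ, Psi A₁ B₁ p.1 p.2 = Psi A₁ B₁ u n := ⟨(u, n), rfl⟩
    dsimp only
    rw [dif_pos hex]
    exact key _ _ _ _ hex.choose_spec
  set M₁ : Submodule ℂ X₁ :=
    Submodule.span ℂ (⋃ n : ℕ, Set.range fun u : U => (A₁ ^ n) (B₁ u)) with hM₁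
  set M₂ : Submodule ℂ X₂ :=
    Submodule.span ℂ (⋃ n : ℕ, Set.range fun u : U => (A₂ ^ n) (B₂ u)) with hM₂
  have hrep : ∀ x : X₁, x ∈ M₁ → ∃ p : (ℕ → U) × ℕ, Psi A₁ B₁ p.1 p.2 = x := fun x hx =>
    (mem_span_iff A₁ B₁ x).mp hx
  -- linear isometry on M₁
  have hgadd : ∀ x y : X₁, x ∈ M₁ → y ∈ M₁ → f (x + y) = f x + f y := by
    intro x y hx hy
    obtain ⟨⟨u, n⟩, rfl⟩ := hrep x hx
    obtain ⟨⟨v, m⟩, rfl⟩ := hrep y hy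
    have : Psi A₁ B₁ u n + Psi A₁ B₁ v m = Psi A₁ B₁ (tr u n + tr v m) (max n m) := by
      rw [Psi_add, Psi_tr A₁ B₁ (le_max_left n m), Psi_tr A₁ B₁ (le_max_right n m)]
    rw [this, hf, hf, hf, Psi_add, Psi_tr A₂ B₂ (le_max_left n m),
      Psi_tr A₂ B₂ (le_max_right n m)]
  have hgsmul : ∀ (c : ℂ) (x : X₁), x ∈ M₁ → f (c • x) = c • f x := by
    intro c x hx
    obtain ⟨⟨u, n⟩, rfl⟩ := hrep x hx
    rw [← Psi_smul, hf, hf, Psi_smul]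
  have hgnorm : ∀ x : X₁, x ∈ M₁ → ‖f x‖ = ‖x‖ := by
    intro x hx
    obtain ⟨⟨u, n⟩, rfl⟩ := hrep x hx
    rw [hf, hnorm]
  let g : M₁ →ₗ[ℂ] X₂ :=
    { toFun := fun x => f x
      map_add' := fun x y => hgadd x y x.2 y.2
      map_smul' := fun c x => hgsmul c x x.2 }
  let gI : M₁ →ₗᵢ[ℂ] X₂ := ⟨g, fun x => hgnorm x x.2⟩
  -- extension along the dense inclusion
  have hdense : Dense (M₁ : Set X₁) :=
    Submodule.dense_iff_topologicalClosure_eq_top.mpr hc₁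
  have h_dense : DenseRange (M₁.subtypeL : M₁ →L[ℂ] X₁) := hdense.denseRange_val
  have h_e : IsUniformInducing (M₁.subtypeL : M₁ →L[ℂ] X₁) :=
    isometry_subtype_coe.isUniformInducing
  let V₀ : X₁ →L[ℂ] X₂ :=
    ContinuousLinearMap.extend gI.toContinuousLinearMap M₁.subtypeL
  have hV₀ : ∀ x : M₁, V₀ x = f x := fun x =>
    ContinuousLinearMap.extend_eq (f := gI.toContinuousLinearMap) (e := M₁.subtypeL) h_dense h_e x
  have hV₀Psi : ∀ (u : ℕ → U) (n : ℕ), V₀ (Psi A₁ B₁ u n) = Psi A₂ B₂ u n := by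
    intro u n
    have hmem : Psi A₁ B₁ u n ∈ M₁ := (mem_span_iff A₁ B₁ _).mpr ⟨(u, n), rfl⟩
    have := hV₀ ⟨Psi A₁ B₁ u n, hmem⟩
    rw [this, hf]
  -- a density principle
  have dense_ind : ∀ (P : X₁ → Prop), IsClosed {x | P x} →
      (∀ (u : ℕ → U) (n : ℕ), P (Psi A₁ B₁ u n)) → ∀ x, P x := by
    intro P hcl hP x
    have hsub : (M₁ : Set X₁) ⊆ {x | P x} := by
      intro y hy
      obtain ⟨⟨u, n⟩, rfl⟩ := hrep y hy
      exact hP u n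
    have : closure (M₁ : Set X₁) ⊆ {x | P x} := hcl.closure_subset_iff.mpr hsub
    exact this (hdense.closure_eq ▸ Set.mem_univ x)
  -- V₀ is isometric
  have hV₀norm : ∀ x : X₁, ‖V₀ x‖ = ‖x‖ := by
    refine dense_ind _ (isClosed_eq V₀.continuous.norm continuous_norm) ?_
    intro u n
    rw [hV₀Psi, hnorm]
  let VI : X₁ →ₗᵢ[ℂ] X₂ := ⟨V₀.toLinearMap, hV₀norm⟩
  -- surjectivity
  have hVIcl : IsClosed (Set.range VI) := VI.isometry.isClosedEmbedding.isClosed_range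
  have hrange : LinearMap.range VI.toLinearMap = ⊤ := by
    rw [eq_top_iff]
    have hle : M₂ ≤ LinearMap.range VI.toLinearMap := by
      intro y hy
      obtain ⟨⟨u, n⟩, rfl⟩ := (mem_span_iff A₂ B₂ y).mp hy
      exact ⟨Psi A₁ B₁ u n, hV₀Psi u n⟩
    have hclr : IsClosed (LinearMap.range VI.toLinearMap : Set X₂) := by
      have hset : (LinearMap.range VI.toLinearMap : Set X₂) = Set.range VI := by
        ext y
        simp only [SetLike.mem_coe, LinearMap.mem_range, Set.mem_range]
        rfl
      rw [hset]; exact hVIcl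
    have hmin : M₂.topologicalClosure ≤ LinearMap.range VI.toLinearMap :=
      Submodule.topologicalClosure_minimal _ hle hclr
    have hc₂' : M₂.topologicalClosure = ⊤ := by rw [hM₂]; exact hc₂
    calc (⊤ : Submodule ℂ X₂) = M₂.topologicalClosure := hc₂'.symm
      _ ≤ LinearMap.range VI.toLinearMap := hmin
  have hsurj : Function.Surjective VI := by
    intro y
    have : y ∈ LinearMap.range VI.toLinearMap := hrange ▸ Submodule.mem_top
    exact this
  refine ⟨LinearIsometryEquiv.ofSurjective VI hsurj, ?_, ?_, ?_⟩
  · -- intertwining with A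
    have : ∀ x : X₁, V₀ (A₁ x) = A₂ (V₀ x) := by
      refine dense_ind _ (isClosed_eq (V₀.continuous.comp A₁.continuous)
        (A₂.continuous.comp V₀.continuous)) ?_
      intro u n
      rw [hV₀Psi, Psi_shift A₁ B₁, hV₀Psi, Psi_shift A₂ B₂]
    intro x
    exact this x
  · -- B
    intro u
    have h1 : B₁ u = Psi A₁ B₁ (fun _ => u) 0 := by simp [Psi]
    have h2 : B₂ u = Psi A₂ B₂ (fun _ => u) 0 := by simp [Psi]
    have := hV₀Psi (fun _ => u) 0
    rw [← h1, ← h2] at this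
    exact this
  · -- C
    have : ∀ x : X₁, C₁ x = C₂ (V₀ x) := by
      refine dense_ind _ (isClosed_eq C₁.continuous (C₂.continuous.comp V₀.continuous)) ?_
      intro u n
      rw [hV₀Psi]
      unfold Psi
      rw [map_sum, map_sum]
      refine Finset.sum_congr rfl fun k _ => ?_
      have := congrArg (fun T : U →L[ℂ] Y => T (u k)) (hmom k)
      simpa using this
    intro x
    exact this x

end
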